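/- Let z ∈ A^Γ be a proper landscape and B ∈ I_z a labeled ball of radius m. Then there exists a proper landscape x' in the orbit closure of z such that B ∈ K_{x'} and H(x'(e)) = 1; that is, B is never realized as a window of x', and x' has height 1 at the identity. -/

import Mathlib

open scoped Pointwise

/-- Word metric of the (right) Cayley graph `Cay(Γ, S)` (right-invariant). -/
noncomputable def wordDist {Γ : Type*} [Group Γ] (S : Set Γ) (γ δ : Γ) : ℕ :=
  sInf {n | ∃ l : List Γ, (∀ s ∈ l, s ∈ S) ∧ l.length = n ∧ l.prod * γ = δ}

/-- `A = {0,1}^ℕ × (ℕ ∪ {∞})`, with `ℕ ∪ {∞}` the one-point compactification of `ℕ`. -/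
abbrev CantorHeightSpace : Type := (ℕ → Bool) × OnePoint ℕ

/-- The translation action `L_γ(x)(δ) = x(δγ)` on `A^Γ`. -/
def Lact {Γ : Type*} [Group Γ] (γ : Γ) (x : Γ → CantorHeightSpace) : Γ → CantorHeightSpace :=
  fun δ => x (δ * γ)

/-- Orbit closure in the product topology on `A^Γ`. -/
def orbitClosure {Γ : Type*} [Group Γ] (y : Γ → CantorHeightSpace) :
    Set (Γ → CantorHeightSpace) :=
  closure {x | ∃ γ : Γ, x = Lact γ y}

/-- An element of `A^Γ` is of totally finite height if no height coordinate is `∞`. -/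
def TotallyFinite {Γ : Type*} [Group Γ] (x : Γ → CantorHeightSpace) : Prop :=
  ∀ γ : Γ, (x γ).2 ≠ OnePoint.infty

/-- The labeled ball (window) `Θ^m_x(γ)`: it records, for each `δ` in the ball of radius `m`
around the identity, the `m`-truncated Cantor coordinate and the height of `x` at `δγ`. -/
def window {Γ : Type*} [Group Γ] (d : Γ → Γ → ℕ) (m : ℕ) (x : Γ → CantorHeightSpace)
    (γ : Γ) : Γ → Option CantorHeightSpace := fun δ =>
  if d 1 δ ≤ m then
    some (fun i => if i < m then (x (δ * γ)).1 i else false, (x (δ * γ)).2)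
  else none

/-- The `z`-local set `(Θ^m_z)^{-1}(S)` determined by a set `S` of labeled balls. -/
def localSet {Γ : Type*} [Group Γ] (d : Γ → Γ → ℕ) (m : ℕ) (z : Γ → CantorHeightSpace)
    (S : Set (Γ → Option CantorHeightSpace)) : Set Γ :=
  {γ | window d m z γ ∈ S}

/-- A proper Cantor labeling. -/
def IsProperCantorLabeling {Γ : Type*} [Group Γ] (d : Γ → Γ → ℕ) (lab : Γ → ℕ → Bool) :
    Prop :=
  ∀ r : ℕ, 0 < r → ∃ Sr : ℕ, 0 < Sr ∧ ∀ γ δ : Γ, 0 < d γ δ → d γ δ ≤ r →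
    ∃ i < Sr, lab γ i ≠ lab δ i

/-- The four landscape conditions for an element of totally finite height. -/
def IsLandscape {Γ : Type*} [Group Γ] (d : Γ → Γ → ℕ) (z : Γ → CantorHeightSpace) : Prop :=
  TotallyFinite z ∧
  (∀ γ δ : Γ, ∀ a b : ℕ, d γ δ = 1 → (z γ).2 = (a : OnePoint ℕ) →
    (z δ).2 = (b : OnePoint ℕ) → |(a : ℤ) - (b : ℤ)| ≤ 1) ∧
  (∀ n : ℕ, 1 ≤ n → ∃ M : ℕ, 1 < M ∧ ∀ γ : Γ, (z γ).2 = (n : OnePoint ℕ) →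
    ∃ δ : Γ, d δ γ ≤ M ∧ (z δ).2 = ((1 : ℕ) : OnePoint ℕ)) ∧
  (∀ l : ℕ, 1 ≤ l → ∃ N : ℕ, 1 < N ∧ ∀ γ : Γ, (z γ).2 = ((1 : ℕ) : OnePoint ℕ) →
    l ≤ {δ : Γ | d γ δ ≤ N ∧ (z δ).2 = ((1 : ℕ) : OnePoint ℕ)}.ncard) ∧
  (∀ m : ℕ, 1 ≤ m → ∃ Sm : ℕ, 1 < Sm ∧ ∀ δ : Γ, ∃ κ : Γ, d δ κ ≤ Sm ∧
    ∃ h : ℕ, m ≤ h ∧ (z κ).2 = (h : OnePoint ℕ))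

/-- A proper landscape: a landscape whose Cantor coordinates form a proper Cantor
labeling. -/
def IsProperLandscape {Γ : Type*} [Group Γ] (d : Γ → Γ → ℕ) (z : Γ → CantorHeightSpace) :
    Prop :=
  IsLandscape d z ∧ IsProperCantorLabeling d (fun γ => (z γ).1)

/-- `K_x`: the labeled balls (of radius `B.1`) never realized as a window of `x`. -/
def Kset {Γ : Type*} [Group Γ] (d : Γ → Γ → ℕ) (x : Γ → CantorHeightSpace) :
    Set (ℕ × (Γ → Option CantorHeightSpace)) :=
  {B | ∀ γ : Γ, window d B.1 x γ ≠ B.2}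

/-- `J_x`: the labeled balls realized within a uniformly bounded distance of every
height-one point of `x`. -/
def Jset {Γ : Type*} [Group Γ] (d : Γ → Γ → ℕ) (x : Γ → CantorHeightSpace) :
    Set (ℕ × (Γ → Option CantorHeightSpace)) :=
  {B | ∃ KB : ℕ, ∀ γ : Γ, (x γ).2 = ((1 : ℕ) : OnePoint ℕ) →
    ∃ δ : Γ, d δ γ ≤ KB ∧ window d B.1 x δ = B.2}

/-- `I_x = ℬ \ (K_x ∪ J_x)`. -/
def Iset {Γ : Type*} [Group Γ] (d : Γ → Γ → ℕ) (x : Γ → CantorHeightSpace) :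
    Set (ℕ × (Γ → Option CantorHeightSpace)) :=
  (Kset d x ∪ Jset d x)ᶜ

section WD
variable {Γ : Type*} [Group Γ] {S : Set Γ}

lemma exists_word (hSsym : ∀ s ∈ S, s⁻¹ ∈ S) (hSgen : Subgroup.closure S = ⊤) (g : Γ) :
    ∃ l : List Γ, (∀ s ∈ l, s ∈ S) ∧ l.prod = g := by
  have hg : g ∈ Subgroup.closure S := by rw [hSgen]; trivial
  induction hg using Subgroup.closure_induction with
  | mem s hs => exact ⟨[s], by simpa using hs, by simp⟩
  | one => exact ⟨[], by simp, by simp⟩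
  | mul a b _ _ ha hb =>
    obtain ⟨l1, h1, e1⟩ := ha; obtain ⟨l2, h2, e2⟩ := hb
    refine ⟨l1 ++ l2, ?_, by simp [List.prod_append, e1, e2]⟩
    intro s hs
    rcases List.mem_append.1 hs with h | h
    exacts [h1 s h, h2 s h]
  | inv a _ ha =>
    obtain ⟨l, h1, e1⟩ := ha
    refine ⟨(l.map fun x => x⁻¹).reverse, ?_, ?_⟩
    · intro s hs
      simp only [List.mem_reverse, List.mem_map] at hs
      obtain ⟨t, ht, rfl⟩ := hs
      exact hSsym t (h1 t ht)
    · rw [← List.prod_inv_reverse, e1]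

lemma wordSet_nonempty (hSsym : ∀ s ∈ S, s⁻¹ ∈ S) (hSgen : Subgroup.closure S = ⊤)
    (γ δ : Γ) :
    {n | ∃ l : List Γ, (∀ s ∈ l, s ∈ S) ∧ l.length = n ∧ l.prod * γ = δ}.Nonempty := by
  obtain ⟨l, hl, he⟩ := exists_word hSsym hSgen (δ * γ⁻¹)
  exact ⟨l.length, l, hl, rfl, by rw [he]; group⟩

lemma wordDist_spec (hSsym : ∀ s ∈ S, s⁻¹ ∈ S) (hSgen : Subgroup.closure S = ⊤)
    (γ δ : Γ) :
    ∃ l : List Γ, (∀ s ∈ l, s ∈ S) ∧ l.length = wordDist S γ δ ∧ l.prod * γ = δ :=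
  Nat.sInf_mem (wordSet_nonempty hSsym hSgen γ δ)

lemma wordDist_le {l : List Γ} (hl : ∀ s ∈ l, s ∈ S) {γ δ : Γ} (he : l.prod * γ = δ) :
    wordDist S γ δ ≤ l.length :=
  Nat.sInf_le ⟨l, hl, rfl, he⟩

lemma wordDist_right_inv (g : Γ) (γ δ : Γ) : wordDist S (γ * g) (δ * g) = wordDist S γ δ := by
  unfold wordDist
  congr 1
  ext n
  constructor
  · rintro ⟨l, hl, hn, he⟩
    exact ⟨l, hl, hn, by rw [← mul_assoc] at he; exact mul_right_cancel he⟩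
  · rintro ⟨l, hl, hn, he⟩
    exact ⟨l, hl, hn, by rw [← mul_assoc, he]⟩

lemma wordDist_symm (hSsym : ∀ s ∈ S, s⁻¹ ∈ S) (hSgen : Subgroup.closure S = ⊤)
    (γ δ : Γ) : wordDist S γ δ = wordDist S δ γ := by
  have key : ∀ a b : Γ, wordDist S b a ≤ wordDist S a b := by
    intro a b
    obtain ⟨l, hl, hn, he⟩ := wordDist_spec hSsym hSgen a b
    have hpr : ((l.map fun x => x⁻¹).reverse).prod * b = a := by
      rw [← List.prod_inv_reverse, ← he]; group
    calc wordDist S b a ≤ ((l.map fun x => x⁻¹).reverse).length :=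
          wordDist_le (by
            intro s hs
            simp only [List.mem_reverse, List.mem_map] at hs
            obtain ⟨t, ht, rfl⟩ := hs
            exact hSsym t (hl t ht)) hpr
      _ = wordDist S a b := by simpa using hn
  exact le_antisymm (key δ γ) (key γ δ)

lemma wordDist_eq_zero (hSsym : ∀ s ∈ S, s⁻¹ ∈ S) (hSgen : Subgroup.closure S = ⊤)
    {γ δ : Γ} (h : wordDist S γ δ = 0) : γ = δ := by
  obtain ⟨l, hl, hn, he⟩ := wordDist_spec hSsym hSgen γ δ
  rw [h, List.length_eq_zero_iff] at hn
  subst hn; simpa using he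

omit [Group Γ] in
lemma listSet_finite (hSfin : S.Finite) (N : ℕ) :
    {l : List Γ | (∀ s ∈ l, s ∈ S) ∧ l.length ≤ N}.Finite := by
  have : Finite ↥S := hSfin
  have hfin : {l : List ↥S | l.length ≤ N}.Finite := List.finite_length_le ↥S N
  have hsub : {l : List Γ | (∀ s ∈ l, s ∈ S) ∧ l.length ≤ N} ⊆
      (List.map (Subtype.val : ↥S → Γ)) '' {l : List ↥S | l.length ≤ N} := by
    rintro l ⟨hl, hn⟩
    refine ⟨l.pmap (fun s h => (⟨s, h⟩ : ↥S)) hl, by simpa using hn, ?_⟩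
    simp [List.map_pmap]
  exact (hfin.image _).subset hsub

lemma ball_finite (hSfin : S.Finite) (hSsym : ∀ s ∈ S, s⁻¹ ∈ S)
    (hSgen : Subgroup.closure S = ⊤) (N : ℕ) (γ : Γ) :
    {δ : Γ | wordDist S γ δ ≤ N}.Finite := by
  have hsub : {δ : Γ | wordDist S γ δ ≤ N} ⊆
      (fun l : List Γ => l.prod * γ) '' {l | (∀ s ∈ l, s ∈ S) ∧ l.length ≤ N} := by
    intro δ hδ
    obtain ⟨l, hl, hn, he⟩ := wordDist_spec hSsym hSgen γ δ
    exact ⟨l, ⟨hl, hn.le.trans hδ⟩, he⟩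
  exact ((listSet_finite hSfin N).image _).subset hsub

end WD

section UF
open Filter
variable {α : Type*}

lemma ulim_eq {X : Type*} [TopologicalSpace X] [T2Space X] (U : Ultrafilter α)
    {f : α → X} {a b : X} (h : Tendsto f U (nhds a)) (hb : ∀ᶠ k in U, f k = b) : a = b :=
  tendsto_nhds_unique h (Tendsto.congr' (by filter_upwards [hb] with k hk using hk.symm)
    tendsto_const_nhds)

lemma uf_finite_choice {ι : Type*} (U : Ultrafilter α) {s : Set ι} (hs : s.Finite)
    {p : ι → α → Prop} (h : ∀ᶠ k in (U : Filter α), ∃ i ∈ s, p i k) :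
    ∃ i ∈ s, ∀ᶠ k in (U : Filter α), p i k := by
  by_contra hc
  push_neg at hc
  have h2 : ∀ i ∈ s, ∀ᶠ k in (U : Filter α), ¬ p i k := by
    intro i hi
    exact hc i hi
  have h3 := (eventually_all_finite hs).2 h2
  obtain ⟨k, ⟨i, hi, hpi⟩, hall⟩ := (h.and h3).exists
  exact hall i hi hpi

lemma isOpen_coe_singleton (n : ℕ) : IsOpen {x : OnePoint ℕ | x = (n : OnePoint ℕ)} := by
  have h : {x : OnePoint ℕ | x = (n : OnePoint ℕ)} = (↑) '' {n} := by ext x; simp [eq_comm]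
  rw [h, OnePoint.isOpen_image_coe]
  exact isOpen_discrete _

lemma tendsto_eq_coe {U : Ultrafilter α} {f : α → OnePoint ℕ} {a : OnePoint ℕ} (n : ℕ)
    (h : Tendsto f U (nhds a)) (ha : a = (n : OnePoint ℕ)) :
    ∀ᶠ k in (U : Filter α), f k = (n : OnePoint ℕ) :=
  h ((isOpen_coe_singleton n).mem_nhds ha)

lemma tendsto_eq_bool {U : Ultrafilter α} {f : α → Bool} {a : Bool}
    (h : Tendsto f U (nhds a)) : ∀ᶠ k in (U : Filter α), f k = a :=
  h ((isOpen_discrete {a}).mem_nhds rfl)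

end UF

section HB
variable {Γ : Type*} [Group Γ] {S : Set Γ}

lemma height_bound (hSsym : ∀ s ∈ S, s⁻¹ ∈ S) (hSgen : Subgroup.closure S = ⊤)
    {z : Γ → CantorHeightSpace} (hz : IsLandscape (wordDist S) z) :
    ∀ (l : List Γ), (∀ s ∈ l, s ∈ S) → ∀ (α : Γ) (b n : ℕ),
      (z α).2 = (b : OnePoint ℕ) → (z (l.prod * α)).2 = (n : OnePoint ℕ) →
      n ≤ b + l.length := by
  obtain ⟨htf, hlip, -⟩ := hz
  intro l
  induction l with
  | nil =>
    intro _ α b n hb hn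
    rw [List.prod_nil, one_mul] at hn
    rw [hb] at hn
    simp [OnePoint.coe_eq_coe] at hn
    omega
  | cons s l ih =>
    intro hsl α b n hb hn
    have hl : ∀ t ∈ l, t ∈ S := fun t ht => hsl t (List.mem_cons_of_mem _ ht)
    obtain ⟨c, hc⟩ := OnePoint.ne_infty_iff_exists.1 (htf (l.prod * α))
    have hcb : c ≤ b + l.length := ih hl α b c hb hc.symm
    have hprod : (s :: l).prod * α = s * (l.prod * α) := by
      rw [List.prod_cons, mul_assoc]
    have hdle : wordDist S (l.prod * α) ((s :: l).prod * α) ≤ 1 := by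
      have := wordDist_le (l := [s]) (by simpa using hsl s List.mem_cons_self)
        (γ := l.prod * α) (δ := (s :: l).prod * α) (by rw [hprod]; simp)
      simpa using this
    rcases Nat.lt_or_ge (wordDist S (l.prod * α) ((s :: l).prod * α)) 1 with h0 | h1
    · have heq0 : l.prod * α = (s :: l).prod * α :=
        wordDist_eq_zero hSsym hSgen (by omega)
      rw [← heq0, ← hc] at hn
      simp [OnePoint.coe_eq_coe] at hn
      simp [List.length_cons]
      omega
    · have hd1 : wordDist S (l.prod * α) ((s :: l).prod * α) = 1 := le_antisymm hdle h1
      have habs := hlip _ _ c n hd1 hc.symm hn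
      rw [abs_le] at habs
      simp [List.length_cons]
      omega

end HB

/-- if `z` is a proper landscape and `B ∈ I_z` is a labeled ball of radius
`m`, then the orbit closure of `z` contains a proper landscape `x'` with `B ∈ K_{x'}`
(so `B` is never realized as a window of `x'`) and `H(x'(e)) = 1`. -/
theorem stmt19 {Γ : Type*} [Group Γ] (S : Set Γ)
    (hSfin : S.Finite) (hSsym : ∀ s ∈ S, s⁻¹ ∈ S) (hSgen : Subgroup.closure S = ⊤)
    (z : Γ → CantorHeightSpace) (hz : IsProperLandscape (wordDist S) z)
    (m : ℕ) (B : Γ → Option CantorHeightSpace)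
    (hB : (m, B) ∈ Iset (wordDist S) z) :
    ∃ x' : Γ → CantorHeightSpace,
      x' ∈ orbitClosure z ∧
      IsProperLandscape (wordDist S) x' ∧
      (m, B) ∈ Kset (wordDist S) x' ∧
      (x' 1).2 = ((1 : ℕ) : OnePoint ℕ) := by
  classical
  set d := wordDist S with hd
  obtain ⟨hzL, hzC⟩ := hz
  obtain ⟨htf, hlip, hc3, hc4, hc5⟩ := hzL
  -- negation of Jset membership
  have hBJ : (m, B) ∉ Jset d z := fun h => hB (Or.inr h)
  simp only [Jset, Set.mem_setOf_eq] at hBJ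
  push_neg at hBJ
  choose γseq hγ1 hγ2 using hBJ
  -- ultrafilter limit
  let U : Ultrafilter ℕ := Ultrafilter.of Filter.atTop
  have hUle : (U : Filter ℕ) ≤ Filter.atTop := Ultrafilter.of_le _
  obtain ⟨x', -, hx'⟩ := isCompact_univ.ultrafilter_le_nhds
    (U.map fun k => Lact (γseq k) z) (by simp)
  have htend : Filter.Tendsto (fun k => Lact (γseq k) z) U (nhds x') := by
    rw [Ultrafilter.coe_map] at hx'
    exact hx'
  have tendCoord : ∀ δ : Γ, Filter.Tendsto (fun k => z (δ * γseq k)) U (nhds (x' δ)) :=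
    fun δ => ((continuous_apply δ).tendsto x').comp htend
  have tend2 : ∀ δ : Γ, Filter.Tendsto (fun k => (z (δ * γseq k)).2) U (nhds (x' δ).2) :=
    fun δ => (continuous_snd.tendsto _).comp (tendCoord δ)
  have tend1 : ∀ (δ : Γ) (i : ℕ),
      Filter.Tendsto (fun k => (z (δ * γseq k)).1 i) U (nhds ((x' δ).1 i)) :=
    fun δ i => ((continuous_apply i).tendsto _).comp ((continuous_fst.tendsto _).comp
      (tendCoord δ))
  -- key: heights converge to finite values
  have key : ∀ δ : Γ, ∃ n : ℕ, (x' δ).2 = (n : OnePoint ℕ) ∧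
      ∀ᶠ k in (U : Filter ℕ), (z (δ * γseq k)).2 = (n : OnePoint ℕ) := by
    intro δ
    obtain ⟨l, hl, hlen, hprod⟩ := wordDist_spec hSsym hSgen 1 δ
    rw [mul_one] at hprod
    have hbd : ∀ k, ∃ n ∈ Set.Iic (wordDist S 1 δ + 1),
        (z (δ * γseq k)).2 = (n : OnePoint ℕ) := by
      intro k
      obtain ⟨n, hn⟩ := OnePoint.ne_infty_iff_exists.1 (htf (δ * γseq k))
      have := height_bound hSsym hSgen ⟨htf, hlip, hc3, hc4, hc5⟩ l hl (γseq k) 1 n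
        (hγ1 k) (by rw [hprod]; exact hn.symm)
      exact ⟨n, by simp only [Set.mem_Iic]; omega, hn.symm⟩
    obtain ⟨n, -, hev⟩ := uf_finite_choice U (Set.finite_Iic _)
      (Filter.Eventually.of_forall hbd)
    exact ⟨n, ulim_eq U (tend2 δ) hev, hev⟩
  have htf' : TotallyFinite x' := by
    intro δ
    obtain ⟨n, hn, -⟩ := key δ
    rw [hn]
    exact OnePoint.coe_ne_infty n
  have heq : ∀ δ : Γ, ∀ᶠ k in (U : Filter ℕ), (z (δ * γseq k)).2 = (x' δ).2 := by
    intro δ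
    obtain ⟨n, hn, hev⟩ := key δ
    filter_upwards [hev] with k hk
    rw [hk, hn]
  have hbit : ∀ (δ : Γ) (i : ℕ), ∀ᶠ k in (U : Filter ℕ),
      (z (δ * γseq k)).1 i = (x' δ).1 i := fun δ i => tendsto_eq_bool (tend1 δ i)
  -- simultaneous eventual equality on finite balls
  have heqBall : ∀ (T : Set Γ), T.Finite → ∀ᶠ k in (U : Filter ℕ),
      ∀ δ ∈ T, (z (δ * γseq k)).2 = (x' δ).2 :=
    fun T hT => (Filter.eventually_all_finite hT).2 fun δ _ => heq δ
  refine ⟨x', ?_, ⟨⟨htf', ?_, ?_, ?_, ?_⟩, ?_⟩, ?_, ?_⟩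
  · -- orbit closure
    exact mem_closure_of_tendsto htend (Filter.Eventually.of_forall fun k => ⟨γseq k, rfl⟩)
  · -- Lipschitz
    intro γ δ a b hd1 ha hb
    have h1 : ∀ᶠ k in (U : Filter ℕ), (z (γ * γseq k)).2 = (a : OnePoint ℕ) := by
      filter_upwards [heq γ] with k hk; rw [hk, ha]
    have h2 : ∀ᶠ k in (U : Filter ℕ), (z (δ * γseq k)).2 = (b : OnePoint ℕ) := by
      filter_upwards [heq δ] with k hk; rw [hk, hb]
    obtain ⟨k, hk1, hk2⟩ := (h1.and h2).exists
    exact hlip (γ * γseq k) (δ * γseq k) a b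
      (by rw [hd] at hd1 ⊢; rw [wordDist_right_inv]; exact hd1) hk1 hk2
  · -- condition 3
    intro n hn
    obtain ⟨M, hM, hMp⟩ := hc3 n hn
    refine ⟨M, hM, ?_⟩
    intro γ hγn
    have hBall : {δ : Γ | d δ γ ≤ M}.Finite := by
      have : {δ : Γ | d δ γ ≤ M} = {δ : Γ | d γ δ ≤ M} := by
        ext δ; simp only [Set.mem_setOf_eq, hd, wordDist_symm hSsym hSgen γ δ]
      rw [this]; exact ball_finite hSfin hSsym hSgen M γ
    have h1 : ∀ᶠ k in (U : Filter ℕ), (z (γ * γseq k)).2 = (n : OnePoint ℕ) := by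
      filter_upwards [heq γ] with k hk; rw [hk, hγn]
    obtain ⟨k, hk1, hk2⟩ := (h1.and (heqBall _ hBall)).exists
    obtain ⟨δ', hd', hz1⟩ := hMp (γ * γseq k) hk1
    refine ⟨δ' * (γseq k)⁻¹, ?_, ?_⟩
    · have : δ' * (γseq k)⁻¹ * γseq k = δ' := by group
      rw [hd, ← wordDist_right_inv (γseq k) (δ' * (γseq k)⁻¹) γ, this]
      exact hd'
    · have hmem : δ' * (γseq k)⁻¹ ∈ {δ : Γ | d δ γ ≤ M} := by
        simp only [Set.mem_setOf_eq, hd, ← wordDist_right_inv (γseq k) (δ' * (γseq k)⁻¹) γ]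
        have : δ' * (γseq k)⁻¹ * γseq k = δ' := by group
        rw [this]; exact hd'
      have := hk2 _ hmem
      rw [← this]
      have : δ' * (γseq k)⁻¹ * γseq k = δ' := by group
      rw [this, hz1]
  · -- condition 4
    intro l hl
    obtain ⟨N, hN, hNp⟩ := hc4 l hl
    refine ⟨N, hN, ?_⟩
    intro γ hγ1'
    have hBall : {δ : Γ | d γ δ ≤ N}.Finite := ball_finite hSfin hSsym hSgen N γ
    have h1 : ∀ᶠ k in (U : Filter ℕ), (z (γ * γseq k)).2 = ((1 : ℕ) : OnePoint ℕ) := by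
      filter_upwards [heq γ] with k hk; rw [hk, hγ1']
    obtain ⟨k, hk1, hk2⟩ := (h1.and (heqBall _ hBall)).exists
    have hTz := hNp (γ * γseq k) hk1
    have hsub : (fun δ' => δ' * (γseq k)⁻¹) ''
        {δ' : Γ | d (γ * γseq k) δ' ≤ N ∧ (z δ').2 = ((1 : ℕ) : OnePoint ℕ)} ⊆
        {δ : Γ | d γ δ ≤ N ∧ (x' δ).2 = ((1 : ℕ) : OnePoint ℕ)} := by
      rintro - ⟨δ', ⟨hdd, hzz⟩, rfl⟩
      have hback : δ' * (γseq k)⁻¹ * γseq k = δ' := by group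
      have hmem : δ' * (γseq k)⁻¹ ∈ {δ : Γ | d γ δ ≤ N} := by
        simp only [Set.mem_setOf_eq, hd,
          ← wordDist_right_inv (γseq k) γ (δ' * (γseq k)⁻¹), hback]
        exact hdd
      refine ⟨hmem, ?_⟩
      rw [← hk2 _ hmem, hback, hzz]
    calc l ≤ {δ' : Γ | d (γ * γseq k) δ' ≤ N ∧
          (z δ').2 = ((1 : ℕ) : OnePoint ℕ)}.ncard := hTz
      _ = ((fun δ' => δ' * (γseq k)⁻¹) ''
          {δ' : Γ | d (γ * γseq k) δ' ≤ N ∧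
            (z δ').2 = ((1 : ℕ) : OnePoint ℕ)}).ncard :=
        (Set.ncard_image_of_injective _ (mul_left_injective (γseq k)⁻¹)).symm
      _ ≤ {δ : Γ | d γ δ ≤ N ∧ (x' δ).2 = ((1 : ℕ) : OnePoint ℕ)}.ncard :=
        Set.ncard_le_ncard hsub (hBall.subset fun δ hδ => hδ.1)
  · -- condition 5
    intro m' hm'
    obtain ⟨Sm, hSm, hp⟩ := hc5 m' hm'
    refine ⟨Sm, hSm, ?_⟩
    intro δ
    have hBall : {κ : Γ | d δ κ ≤ Sm}.Finite := ball_finite hSfin hSsym hSgen Sm δ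
    obtain ⟨k, hk2⟩ := (heqBall _ hBall).exists
    obtain ⟨κ', hdd, h, hmh, hκ'⟩ := hp (δ * γseq k)
    have hback : κ' * (γseq k)⁻¹ * γseq k = κ' := by group
    have hmem : κ' * (γseq k)⁻¹ ∈ {κ : Γ | d δ κ ≤ Sm} := by
      simp only [Set.mem_setOf_eq, hd,
        ← wordDist_right_inv (γseq k) δ (κ' * (γseq k)⁻¹), hback]
      exact hdd
    refine ⟨κ' * (γseq k)⁻¹, hmem, h, hmh, ?_⟩
    rw [← hk2 _ hmem, hback, hκ']
  · -- proper Cantor labeling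
    intro r hr
    obtain ⟨Sr, hSr, hp⟩ := hzC r hr
    refine ⟨Sr, hSr, ?_⟩
    intro γ δ hd0 hdr
    have hevγ : ∀ᶠ k in (U : Filter ℕ), ∀ i ∈ Set.Iio Sr,
        (z (γ * γseq k)).1 i = (x' γ).1 i :=
      (Filter.eventually_all_finite (Set.finite_Iio Sr)).2 fun i _ => hbit γ i
    have hevδ : ∀ᶠ k in (U : Filter ℕ), ∀ i ∈ Set.Iio Sr,
        (z (δ * γseq k)).1 i = (x' δ).1 i :=
      (Filter.eventually_all_finite (Set.finite_Iio Sr)).2 fun i _ => hbit δ i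
    obtain ⟨k, hkγ, hkδ⟩ := (hevγ.and hevδ).exists
    obtain ⟨i, hiSr, hne⟩ := hp (γ * γseq k) (δ * γseq k)
      (by rw [hd] at hd0 ⊢; rwa [wordDist_right_inv])
      (by rw [hd] at hdr ⊢; rwa [wordDist_right_inv])
    refine ⟨i, hiSr, ?_⟩
    show (x' γ).1 i ≠ (x' δ).1 i
    rw [← hkγ i hiSr, ← hkδ i hiSr]
    exact hne
  · -- Kset
    intro γ hwin0
    have hwin : window d m x' γ = B := hwin0
    have hBallm : {δ : Γ | d 1 δ ≤ m}.Finite := ball_finite hSfin hSsym hSgen m 1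
    have hev2 : ∀ᶠ k in (U : Filter ℕ), ∀ δ ∈ {δ : Γ | d 1 δ ≤ m},
        (z (δ * γ * γseq k)).2 = (x' (δ * γ)).2 ∧
        ∀ i ∈ Set.Iio m, (z (δ * γ * γseq k)).1 i = (x' (δ * γ)).1 i := by
      refine (Filter.eventually_all_finite hBallm).2 fun δ _ => ?_
      exact (heq (δ * γ)).and
        ((Filter.eventually_all_finite (Set.finite_Iio m)).2 fun i _ => hbit (δ * γ) i)
    have hev3 : ∀ᶠ k in (U : Filter ℕ), d (γ * γseq k) (γseq k) ≤ k := by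
      apply hUle
      have : ∀ᶠ k in Filter.atTop, d γ 1 ≤ k := Filter.eventually_ge_atTop _
      filter_upwards [this] with k hk
      rw [hd] at hk ⊢
      calc wordDist S (γ * γseq k) (γseq k) = wordDist S γ 1 := by
            rw [← wordDist_right_inv (γseq k) γ 1, one_mul]
        _ ≤ k := hk
    obtain ⟨k, hk2, hk3⟩ := (hev2.and hev3).exists
    have hwz : window d m z (γ * γseq k) = B := by
      rw [← hwin]
      funext δ
      unfold window
      by_cases hδ : d 1 δ ≤ m
      · simp only [hδ, if_true]
        obtain ⟨hh, hb⟩ := hk2 δ hδ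
        congr 1
        refine Prod.ext ?_ ?_
        · funext i
          by_cases him : i < m
          · simp only [him, if_true, ← mul_assoc]
            exact (hb i him).symm ▸ rfl
          · simp [him]
        · simp only [← mul_assoc]
          exact hh
      · simp [hδ]
    exact hγ2 k (γ * γseq k) hk3 hwz
  · -- height 1 at identity
    have h1 : ∀ᶠ k in (U : Filter ℕ), (z (1 * γseq k)).2 = (x' 1).2 := heq 1
    obtain ⟨k, hk⟩ := h1.exists
    rw [← hk, one_mul]
    exact hγ1 k
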